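/- arXiv:1301.4309 — 6 statements merged into one kernel-verified Lean document; each statement's English description precedes it below -/
import Mathlib

section
/- Let x₁, …, x_k be elements of the isotropic cone C_n with ⟨x_i | x_j⟩ ≤ 0 for all i, j, let t₁, …, t_k be strictly positive real numbers, and set u = t₁x₁ + ⋯ + t_k x_k. If q_{2,n}(u) = 0, then ⟨x_i | x_j⟩ = 0 for all i, j; consequently the linear span of {x₁, …, x_k} is totally isotropic (q_{2,n} vanishes identically on it). -/
/-- The symmetric bilinear form associated to `q_{2,n}` on `ℝ × ℝ × ℝⁿ`
(coordinates `(u, v, x₁, …, xₙ)`). -/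
def bilin (n : ℕ) (x y : ℝ × ℝ × (Fin n → ℝ)) : ℝ :=
  -(x.1 * y.1) - x.2.1 * y.2.1 + ∑ i, x.2.2 i * y.2.2 i

/-- The quadratic form `q_{2,n}(u,v,x₁,…,xₙ) = -u² - v² + x₁² + ⋯ + xₙ²`. -/
def quad (n : ℕ) (x : ℝ × ℝ × (Fin n → ℝ)) : ℝ := bilin n x x

lemma bilin_symm (n : ℕ) (a b : ℝ × ℝ × (Fin n → ℝ)) : bilin n a b = bilin n b a := by
  simp [bilin, mul_comm]

/-- `bilin` as a linear map in the first argument. -/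
def bilinL (n : ℕ) (c : ℝ × ℝ × (Fin n → ℝ)) : (ℝ × ℝ × (Fin n → ℝ)) →ₗ[ℝ] ℝ where
  toFun w := bilin n w c
  map_add' a b := by
    simp [bilin, add_mul, Finset.sum_add_distrib]; ring
  map_smul' r a := by
    simp [bilin, smul_eq_mul, mul_add, mul_sub, mul_neg, Finset.mul_sum, mul_assoc]

lemma bilin_sum (n k : ℕ) (x : Fin k → ℝ × ℝ × (Fin n → ℝ)) (c d : Fin k → ℝ) :
    bilin n (∑ i, c i • x i) (∑ j, d j • x j)
      = ∑ i, ∑ j, c i * d j * bilin n (x i) (x j) := by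
  have h : ∀ (e : Fin k → ℝ) b, bilin n (∑ i, e i • x i) b = ∑ i, e i * bilin n (x i) b := by
    intro e b
    show bilinL n b (∑ i, e i • x i) = _
    rw [map_sum]
    exact Finset.sum_congr rfl fun i _ => by rw [map_smul]; rfl
  rw [h c]
  refine Finset.sum_congr rfl fun i _ => ?_
  rw [bilin_symm n (x i), h d, Finset.mul_sum]
  refine Finset.sum_congr rfl fun j _ => ?_
  rw [bilin_symm n (x j) (x i)]
  ring

/-- If `x₁, …, x_k` lie on the isotropic cone of `q_{2,n}`, have pairwise
nonpositive scalar products, and some strictly positive combination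
`u = ∑ tᵢ xᵢ` satisfies `q_{2,n}(u) = 0`, then all scalar products
`⟨xᵢ | xⱼ⟩` vanish, and the linear span of the `xᵢ` is totally isotropic. -/
theorem stmt1 (n k : ℕ) (hn : 1 ≤ n) (x : Fin k → ℝ × ℝ × (Fin n → ℝ))
    (t : Fin k → ℝ)
    (hiso : ∀ i, quad n (x i) = 0)
    (hpair : ∀ i j, bilin n (x i) (x j) ≤ 0)
    (ht : ∀ i, 0 < t i)
    (hu : quad n (∑ i, t i • x i) = 0) :
    (∀ i j, bilin n (x i) (x j) = 0) ∧
    (∀ w ∈ Submodule.span ℝ (Set.range x), quad n w = 0) := by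
  have hexp : quad n (∑ i, t i • x i)
      = ∑ i, ∑ j, t i * t j * bilin n (x i) (x j) := bilin_sum n k x t t
  have hzero : ∀ i j, bilin n (x i) (x j) = 0 := by
    have hsum : (∑ i, ∑ j, t i * t j * bilin n (x i) (x j)) = 0 := by
      rw [← hexp]; exact hu
    have hnonpos : ∀ i ∈ Finset.univ, (∑ j, t i * t j * bilin n (x i) (x j)) ≤ 0 := by
      intro i _
      refine Finset.sum_nonpos fun j _ => ?_
      exact mul_nonpos_of_nonneg_of_nonpos (mul_nonneg (ht i).le (ht j).le) (hpair i j)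
    have h1 := (Finset.sum_eq_zero_iff_of_nonpos hnonpos).mp hsum
    intro i j
    have h2 : (∑ j, t i * t j * bilin n (x i) (x j)) = 0 := h1 i (Finset.mem_univ i)
    have h3 : ∀ j ∈ Finset.univ, t i * t j * bilin n (x i) (x j) ≤ 0 := fun j _ =>
      mul_nonpos_of_nonneg_of_nonpos (mul_nonneg (ht i).le (ht j).le) (hpair i j)
    have h4 := (Finset.sum_eq_zero_iff_of_nonpos h3).mp h2 j (Finset.mem_univ j)
    have hpos : 0 < t i * t j := mul_pos (ht i) (ht j)
    nlinarith [hpair i j]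
  refine ⟨hzero, fun w hw => ?_⟩
  obtain ⟨c, rfl⟩ := (Submodule.mem_span_range_iff_exists_fun ℝ).mp hw
  rw [quad, bilin_sum]
  refine Finset.sum_eq_zero fun i _ => Finset.sum_eq_zero fun j _ => ?_
  rw [hzero i j, mul_zero]
end

section
/- Let (θ, x) and (θ′, x′) be points of ℝ × S^{n-1} with |θ − θ′| ≤ π, and set P(θ, x) = (cos θ, sin θ, x) ∈ C_n ⊆ ℝ^{n+2}. Then: (i) |θ − θ′| ≤ d(x, x′) if and only if ⟨P(θ,x) | P(θ′,x′)⟩ ≤ 0; and (ii) |θ − θ′| < d(x, x′) if and only if ⟨P(θ,x) | P(θ′,x′)⟩ < 0. (This is the coordinate form of the criterion: a subset of the Einstein universe is achronal, resp. acausal, iff the scalar products of distinct points are nonpositive, resp. negative.) -/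
open scoped RealInnerProductSpace
open Real

/-- Spherical (geodesic) distance between unit vectors of a Euclidean space:
`d(x,y) = arccos⟨x,y⟩`. -/
noncomputable def sphDist {n : ℕ} (x y : EuclideanSpace ℝ (Fin n)) : ℝ :=
  Real.arccos ⟪x, y⟫

/-- The symmetric bilinear form of `q_{2,n}` on `ℝ × ℝ × ℝⁿ`. -/
noncomputable def bilinE (n : ℕ) (p q : ℝ × ℝ × EuclideanSpace ℝ (Fin n)) : ℝ :=
  -(p.1 * q.1) - p.2.1 * q.2.1 + ⟪p.2.2, q.2.2⟫

/-- The map `(θ, x) ↦ (cos θ, sin θ, x)` from `ℝ × S^{n-1}` to the isotropic cone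
`C_n ⊆ ℝ^{n+2}`. -/
noncomputable def Pmap {n : ℕ} (θ : ℝ) (x : EuclideanSpace ℝ (Fin n)) :
    ℝ × ℝ × EuclideanSpace ℝ (Fin n) :=
  (Real.cos θ, Real.sin θ, x)

lemma le_arccos_iff {a t : ℝ} (ha0 : 0 ≤ a) (haπ : a ≤ π) (ht : |t| ≤ 1) :
    a ≤ Real.arccos t ↔ t ≤ Real.cos a := by
  obtain ⟨ht1, ht2⟩ := abs_le.mp ht
  constructor
  · intro h
    have := Real.cos_le_cos_of_nonneg_of_le_pi ha0 (Real.arccos_le_pi t) h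
    rwa [Real.cos_arccos ht1 ht2] at this
  · intro h
    by_contra hc
    push_neg at hc
    have := Real.cos_lt_cos_of_nonneg_of_le_pi (Real.arccos_nonneg t) haπ hc
    rw [Real.cos_arccos ht1 ht2] at this
    linarith

lemma lt_arccos_iff {a t : ℝ} (ha0 : 0 ≤ a) (haπ : a ≤ π) (ht : |t| ≤ 1) :
    a < Real.arccos t ↔ t < Real.cos a := by
  obtain ⟨ht1, ht2⟩ := abs_le.mp ht
  constructor
  · intro h
    have := Real.cos_lt_cos_of_nonneg_of_le_pi ha0 (Real.arccos_le_pi t) h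
    rwa [Real.cos_arccos ht1 ht2] at this
  · intro h
    by_contra hc
    push_neg at hc
    have := Real.cos_le_cos_of_nonneg_of_le_pi (Real.arccos_nonneg t) haπ hc
    rw [Real.cos_arccos ht1 ht2] at this
    linarith

/-- Coordinate form of the achronality/acausality criterion: for points
`(θ,x)`, `(θ′,x′)` of `ℝ × S^{n-1}` with `|θ − θ′| ≤ π`, one has
`|θ − θ′| ≤ d(x,x′)` iff `⟨P(θ,x) | P(θ′,x′)⟩ ≤ 0`, and
`|θ − θ′| < d(x,x′)` iff `⟨P(θ,x) | P(θ′,x′)⟩ < 0`. -/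
theorem stmt2 (n : ℕ) (hn : 1 ≤ n) (θ θ' : ℝ)
    (x x' : EuclideanSpace ℝ (Fin n)) (hx : ‖x‖ = 1) (hx' : ‖x'‖ = 1)
    (hθ : |θ - θ'| ≤ π) :
    (|θ - θ'| ≤ sphDist x x' ↔ bilinE n (Pmap θ x) (Pmap θ' x') ≤ 0) ∧
    (|θ - θ'| < sphDist x x' ↔ bilinE n (Pmap θ x) (Pmap θ' x') < 0) := by
  have ht : |⟪x, x'⟫| ≤ 1 := by
    calc |⟪x, x'⟫| ≤ ‖x‖ * ‖x'‖ := abs_real_inner_le_norm x x'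
    _ = 1 := by rw [hx, hx']; ring
  have hb : bilinE n (Pmap θ x) (Pmap θ' x') = ⟪x, x'⟫ - Real.cos (|θ - θ'|) := by
    simp only [bilinE, Pmap, Real.cos_abs]
    rw [Real.cos_sub]
    ring
  constructor
  · rw [sphDist, le_arccos_iff (abs_nonneg _) hθ ht, hb]; constructor <;> intro h <;> linarith
  · rw [sphDist, lt_arccos_iff (abs_nonneg _) hθ ht, hb]; constructor <;> intro h <;> linarith
end

section
/- For every m ≥ 1 and every z ∈ ℝ^{m+1}: ⟨z | x⟩ < 0 for every future-pointing null vector x if and only if z is future-pointing timelike (i.e. q_{1,m}(z) < 0 and z₀ > 0). -/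
/-- The Minkowski quadratic form `q_{1,m}(x) = -x₀² + x₁² + ⋯ + x_m²` on
`ℝ × ℝᵐ` (first coordinate `x₀`). -/
def qMink (m : ℕ) (x : ℝ × (Fin m → ℝ)) : ℝ :=
  -(x.1 ^ 2) + ∑ i, (x.2 i) ^ 2

/-- The symmetric bilinear form associated to `q_{1,m}`. -/
def bMink (m : ℕ) (x y : ℝ × (Fin m → ℝ)) : ℝ :=
  -(x.1 * y.1) + ∑ i, x.2 i * y.2 i

/-- `⟨z | x⟩ < 0` for every future-pointing null vector `x` if and only if
`z` is future-pointing timelike (`q_{1,m}(z) < 0` and `z₀ > 0`). -/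
theorem stmt9 (m : ℕ) (hm : 1 ≤ m) (z : ℝ × (Fin m → ℝ)) :
    (∀ x : ℝ × (Fin m → ℝ), qMink m x = 0 → 0 < x.1 → bMink m z x < 0) ↔
      (qMink m z < 0 ∧ 0 < z.1) := by
  constructor
  · intro h
    set i0 : Fin m := ⟨0, hm⟩
    have hsingle : ∑ i, (Pi.single (M := fun _ : Fin m => ℝ) i0 1 i) ^ 2 = 1 := by
      rw [Finset.sum_eq_single i0]
      · simp
      · intro b _ hb; simp [Pi.single_apply, hb]
      · simp
    have h1 := h (1, Pi.single (M := fun _ : Fin m => ℝ) i0 1) (by simp [qMink, hsingle]) one_pos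
    have h2 := h (1, fun i => -(Pi.single (M := fun _ : Fin m => ℝ) i0 1 i))
      (by simp [qMink, neg_pow, hsingle]) one_pos
    simp only [bMink] at h1 h2
    have e1 : ∑ i, z.2 i * Pi.single (M := fun _ : Fin m => ℝ) i0 1 i = z.2 i0 := by
      rw [Finset.sum_eq_single i0]
      · simp
      · intro b _ hb; simp [Pi.single_apply, hb]
      · simp
    rw [e1] at h1
    have e2 : ∑ i, z.2 i * -(Pi.single (M := fun _ : Fin m => ℝ) i0 1 i) = -(z.2 i0) := by
      simp only [mul_neg]
      rw [Finset.sum_neg_distrib, e1]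
    rw [e2] at h2
    have hz0 : 0 < z.1 := by linarith
    refine ⟨?_, hz0⟩
    set S := ∑ i, (z.2 i) ^ 2 with hS
    have hSnn : 0 ≤ S := Finset.sum_nonneg fun i _ => sq_nonneg _
    rcases eq_or_lt_of_le hSnn with hS0 | hSpos
    · simp only [qMink, ← hS, ← hS0]
      nlinarith
    · set s := Real.sqrt S with hs
      have hspos : 0 < s := Real.sqrt_pos.2 hSpos
      have hsq : s ^ 2 = S := Real.sq_sqrt hSnn
      have h3 := h (s, z.2) (by simp [qMink, ← hS, hsq]) hspos
      simp only [bMink] at h3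
      have h4 : ∑ i, z.2 i * z.2 i = S := by
        rw [hS]; congr 1; ext i; ring
      rw [h4] at h3
      simp only [qMink, ← hS]
      nlinarith
  · rintro ⟨hq, hz0⟩ x hx hx0
    have hq' : ∑ i, (z.2 i) ^ 2 < z.1 ^ 2 := by
      simp only [qMink] at hq; linarith
    have hx' : ∑ i, (x.2 i) ^ 2 = x.1 ^ 2 := by
      simp only [qMink] at hx; linarith
    have hcs : (∑ i, z.2 i * x.2 i) ^ 2 ≤
        (∑ i, (z.2 i) ^ 2) * (∑ i, (x.2 i) ^ 2) :=
      Finset.sum_mul_sq_le_sq_mul_sq Finset.univ z.2 x.2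
    simp only [bMink]
    nlinarith [hcs, hq', hx', mul_pos hz0 hx0, pow_pos hx0 2,
      Finset.sum_nonneg (fun i (_ : i ∈ (Finset.univ : Finset (Fin m))) => sq_nonneg (z.2 i))]
end

section
/- Let p, q ≥ 1 and n = p + q. Identify ℝ^{n+2} = ℝ^{p+1} × ℝ^{q+1} with the quadratic form q_{2,n}(a, b) = q_{1,p}(a) + q_{1,q}(b), and set Ĉ⁺_p = {(a, 0) : a future-pointing null in ℝ^{1,p}} and Ĉ⁺_q = {(0, b) : b future-pointing null in ℝ^{1,q}}. Then the invisible domain E = {z ∈ ℝ^{n+2} : q_{2,n}(z) < 0 and ⟨z | x⟩ < 0 for every x ∈ Ĉ⁺_p ∪ Ĉ⁺_q} equals {(a, b) : a future-pointing timelike in ℝ^{1,p} and b future-pointing timelike in ℝ^{1,q}}, and this set is exactly the interior in ℝ^{n+2} of the convex hull of Ĉ⁺_p ∪ Ĉ⁺_q. (The invisible domain of Λ_p ∪ Λ_q is the interior of its convex hull.) -/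
/-- `ℝ^{n+2} = ℝ^{p+1} × ℝ^{q+1}` with the quadratic form
`q_{2,n}(a,b) = q_{1,p}(a) + q_{1,q}(b)`. -/
def q2 (p q : ℕ) (z : (ℝ × (Fin p → ℝ)) × (ℝ × (Fin q → ℝ))) : ℝ :=
  qMink p z.1 + qMink q z.2

/-- The bilinear form associated to `q_{2,n} = q_{1,p} ⊕ q_{1,q}`. -/
def b2 (p q : ℕ) (z w : (ℝ × (Fin p → ℝ)) × (ℝ × (Fin q → ℝ))) : ℝ :=
  bMink p z.1 w.1 + bMink q z.2 w.2

/-- `Ĉ⁺_p = {(a, 0) : a future-pointing null in ℝ^{1,p}}`. -/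
def Cplusp (p q : ℕ) : Set ((ℝ × (Fin p → ℝ)) × (ℝ × (Fin q → ℝ))) :=
  {z | qMink p z.1 = 0 ∧ 0 < z.1.1 ∧ z.2 = 0}

/-- `Ĉ⁺_q = {(0, b) : b future-pointing null in ℝ^{1,q}}`. -/
def Cplusq (p q : ℕ) : Set ((ℝ × (Fin p → ℝ)) × (ℝ × (Fin q → ℝ))) :=
  {z | qMink q z.2 = 0 ∧ 0 < z.2.1 ∧ z.1 = 0}

/-- The invisible domain of `Ĉ⁺_p ∪ Ĉ⁺_q`. -/
def invisDom (p q : ℕ) : Set ((ℝ × (Fin p → ℝ)) × (ℝ × (Fin q → ℝ))) :=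
  {z | q2 p q z < 0 ∧ ∀ x ∈ Cplusp p q ∪ Cplusq p q, b2 p q z x < 0}

/-! ### Auxiliary lemmas -/

lemma lem1 {m : ℕ} (a u : ℝ × (Fin m → ℝ)) (ha : qMink m a < 0) (ha0 : 0 < a.1)
    (hu : qMink m u = 0) (hu0 : 0 < u.1) : bMink m a u < 0 := by
  have hcs := Finset.sum_mul_sq_le_sq_mul_sq Finset.univ a.2 u.2
  have hSa : (0:ℝ) ≤ ∑ i, a.2 i ^ 2 := Finset.sum_nonneg fun i _ => sq_nonneg _
  have hSu : (∑ i, u.2 i ^ 2) = u.1 ^ 2 := by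
    have := hu; unfold qMink at this; linarith
  have hA : (∑ i, a.2 i ^ 2) < a.1 ^ 2 := by
    have := ha; unfold qMink at this; linarith
  have h2 : (∑ i, a.2 i * u.2 i) ^ 2 < (a.1 * u.1) ^ 2 := by
    rw [hSu] at hcs; nlinarith [sq_nonneg u.1, mul_pos hu0 hu0]
  have hP := lt_of_pow_lt_pow_left₀ 2 (le_of_lt (mul_pos ha0 hu0)) h2
  unfold bMink; linarith

lemma lem2 {m : ℕ} (hm : 1 ≤ m) (a : ℝ × (Fin m → ℝ))
    (h : ∀ u : ℝ × (Fin m → ℝ), qMink m u = 0 → 0 < u.1 → bMink m a u < 0) :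
    qMink m a < 0 ∧ 0 < a.1 := by
  set j : Fin m := ⟨0, hm⟩ with hj
  have hqc : ∀ c : ℝ, qMink m (|c|, fun i => if i = j then c else 0) = 0 := by
    intro c; unfold qMink; simp [apply_ite (·^2), sq_abs]
  have hbc : ∀ c : ℝ, bMink m a (|c|, fun i => if i = j then c else 0)
      = -(a.1 * |c|) + a.2 j * c := by
    intro c; unfold bMink; simp [mul_ite]
  have h1 := h (|(1:ℝ)|, fun i => if i = j then 1 else 0) (hqc 1) (by simp)
  have h2 := h (|(-1:ℝ)|, fun i => if i = j then -1 else 0) (hqc (-1)) (by simp)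
  rw [hbc 1] at h1
  rw [hbc (-1)] at h2
  simp only [abs_one, abs_neg] at h1 h2
  have ha0 : 0 < a.1 := by nlinarith
  refine ⟨?_, ha0⟩
  have hSnn : (0:ℝ) ≤ ∑ i, a.2 i ^ 2 := Finset.sum_nonneg fun i _ => sq_nonneg _
  by_cases hS0 : (∑ i, a.2 i ^ 2) = 0
  · unfold qMink; rw [hS0]; nlinarith
  · have hSpos : 0 < ∑ i, a.2 i ^ 2 := lt_of_le_of_ne hSnn (Ne.symm hS0)
    set s := Real.sqrt (∑ i, a.2 i ^ 2) with hs
    have hspos : 0 < s := Real.sqrt_pos.2 hSpos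
    have hs2 : s ^ 2 = ∑ i, a.2 i ^ 2 := Real.sq_sqrt hSnn
    have hqu : qMink m (s, a.2) = 0 := by unfold qMink; rw [← hs2]; ring
    have h3 := h (s, a.2) hqu hspos
    unfold bMink at h3
    have hsum : ∑ i, a.2 i * a.2 i = ∑ i, a.2 i ^ 2 :=
      Finset.sum_congr rfl fun i _ => (sq (a.2 i)).symm
    simp only at h3
    rw [hsum, ← hs2] at h3
    have hlt : s < a.1 := by nlinarith
    unfold qMink; rw [← hs2]; nlinarith

/-- decomposition of a timelike future vector as avg of two null future vectors -/
lemma lem3 {m : ℕ} (hm : 1 ≤ m) (a : ℝ × (Fin m → ℝ)) (ha : qMink m a < 0)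
    (ha0 : 0 < a.1) : ∃ u v : ℝ × (Fin m → ℝ),
    qMink m u = 0 ∧ 0 < u.1 ∧ qMink m v = 0 ∧ 0 < v.1 ∧
    (1/2 : ℝ) • u + (1/2 : ℝ) • v = a := by
  have hSnn : (0:ℝ) ≤ ∑ i, a.2 i ^ 2 := Finset.sum_nonneg fun i _ => sq_nonneg _
  have hA : (∑ i, a.2 i ^ 2) < a.1 ^ 2 := by
    have := ha; unfold qMink at this; linarith
  by_cases hS0 : (∑ i, a.2 i ^ 2) = 0
  · set j : Fin m := ⟨0, hm⟩ with hj
    have hz : a.2 = 0 := by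
      funext i
      have := (Finset.sum_eq_zero_iff_of_nonneg (fun i _ => sq_nonneg (a.2 i))).1 hS0 i
        (Finset.mem_univ i)
      exact pow_eq_zero_iff (two_ne_zero) |>.1 this
    refine ⟨(a.1, fun i => if i = j then a.1 else 0),
            (a.1, fun i => if i = j then -a.1 else 0), ?_, ha0, ?_, ha0, ?_⟩
    · unfold qMink; simp [apply_ite (·^2)]
    · unfold qMink; simp [apply_ite (·^2)]
    · ext
      · simp; ring
      · rename_i i
        simp [hz, Pi.add_apply]
        by_cases hij : i = j <;> simp [hij]
  · have hSpos : 0 < ∑ i, a.2 i ^ 2 := lt_of_le_of_ne hSnn (Ne.symm hS0)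
    set s := Real.sqrt (∑ i, a.2 i ^ 2) with hs
    have hspos : 0 < s := Real.sqrt_pos.2 hSpos
    have hs2 : s ^ 2 = ∑ i, a.2 i ^ 2 := Real.sq_sqrt hSnn
    have hlt : s < a.1 := by nlinarith
    have hmulsum : ∀ c : ℝ, ∑ i, (c * a.2 i) ^ 2 = c ^ 2 * ∑ i, a.2 i ^ 2 := by
      intro c; rw [Finset.mul_sum]; exact Finset.sum_congr rfl fun i _ => by ring
    refine ⟨(a.1 + s, fun i => ((a.1 + s)/s) * a.2 i),
            (a.1 - s, fun i => ((s - a.1)/s) * a.2 i), ?_, by linarith, ?_, by linarith, ?_⟩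
    · unfold qMink; simp only
      rw [hmulsum, ← hs2]
      field_simp
      try ring
    · unfold qMink; simp only
      rw [hmulsum, ← hs2]
      field_simp
      try ring
    · ext
      · simp; ring
      · rename_i i
        simp [Pi.add_apply]
        field_simp
        ring

/-- closed future causal cone -/
def Kc (m : ℕ) : Set (ℝ × (Fin m → ℝ)) := {a | Real.sqrt (∑ i, a.2 i ^ 2) ≤ a.1}

lemma normE (m : ℕ) (v : Fin m → ℝ) :
    Real.sqrt (∑ i, v i ^ 2) = ‖(WithLp.equiv 2 (Fin m → ℝ)).symm v‖ := by
  rw [EuclideanSpace.norm_eq]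
  congr 1
  exact Finset.sum_congr rfl fun i _ => by
    simp [WithLp.equiv_symm_apply, PiLp.toLp_apply, Real.norm_eq_abs, sq_abs]

lemma convex_Kc (m : ℕ) : Convex ℝ (Kc m) := by
  rintro a ha b hb la mu hla hmu hlm
  simp only [Kc, Set.mem_setOf_eq] at *
  have h1 : (la • a + mu • b).1 = la * a.1 + mu * b.1 := rfl
  have h2 : (la • a + mu • b).2 = la • a.2 + mu • b.2 := rfl
  rw [h1, h2]
  calc Real.sqrt (∑ i, (la • a.2 + mu • b.2) i ^ 2)
      = ‖la • (WithLp.equiv 2 (Fin m → ℝ)).symm a.2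
          + mu • (WithLp.equiv 2 (Fin m → ℝ)).symm b.2‖ := by
        rw [normE]
        congr 1
    _ ≤ la * ‖(WithLp.equiv 2 (Fin m → ℝ)).symm a.2‖
          + mu * ‖(WithLp.equiv 2 (Fin m → ℝ)).symm b.2‖ := by
        refine (norm_add_le _ _).trans ?_
        rw [norm_smul, norm_smul, Real.norm_eq_abs, Real.norm_eq_abs,
          abs_of_nonneg hla, abs_of_nonneg hmu]
    _ ≤ la * a.1 + mu * b.1 := by
        rw [← normE, ← normE]
        exact add_le_add (mul_le_mul_of_nonneg_left ha hla)
          (mul_le_mul_of_nonneg_left hb hmu)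

lemma cont_sq (m : ℕ) : Continuous fun a : ℝ × (Fin m → ℝ) => ∑ i, a.2 i ^ 2 :=
  continuous_finset_sum _ fun i _ => ((continuous_apply i).comp continuous_snd).pow 2

lemma interior_Kc (m : ℕ) :
    interior (Kc m) = {a | Real.sqrt (∑ i, a.2 i ^ 2) < a.1} := by
  apply le_antisymm
  · intro a ha
    rcases Metric.mem_nhds_iff.1 (mem_interior_iff_mem_nhds.1 ha) with ⟨ε, hε, hball⟩
    have hz : (a.1 - ε/2, a.2) ∈ Kc m := by
      apply hball
      rw [Metric.mem_ball, Prod.dist_eq]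
      have hd : dist (a.1 - ε/2) a.1 = ε/2 := by
        rw [Real.dist_eq, abs_of_nonpos (by linarith)]; ring
      rw [hd, dist_self]
      exact max_lt (by linarith) hε
    simp only [Kc, Set.mem_setOf_eq] at hz ⊢
    exact lt_of_le_of_lt hz (by linarith)
  · apply interior_maximal
    · intro a ha
      simp only [Kc, Set.mem_setOf_eq] at *
      exact ha.le
    · exact isOpen_lt (Real.continuous_sqrt.comp (cont_sq m)) continuous_fst

lemma sqrt_lt_iff_timelike (m : ℕ) (a : ℝ × (Fin m → ℝ)) :
    Real.sqrt (∑ i, a.2 i ^ 2) < a.1 ↔ (qMink m a < 0 ∧ 0 < a.1) := by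
  have hSnn : (0:ℝ) ≤ ∑ i, a.2 i ^ 2 := Finset.sum_nonneg fun i _ => sq_nonneg _
  have hs2 := Real.sq_sqrt hSnn
  have hnn := Real.sqrt_nonneg (∑ i, a.2 i ^ 2)
  constructor
  · intro h
    have ha0 : 0 < a.1 := lt_of_le_of_lt hnn h
    exact ⟨by unfold qMink; nlinarith, ha0⟩
  · rintro ⟨h1, h2⟩
    have hA : (∑ i, a.2 i ^ 2) < a.1 ^ 2 := by unfold qMink at h1; linarith
    nlinarith

lemma b2_left (p q : ℕ) (z : (ℝ × (Fin p → ℝ)) × (ℝ × (Fin q → ℝ)))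
    (u : ℝ × (Fin p → ℝ)) : b2 p q z (u, 0) = bMink p z.1 u := by
  simp [b2, bMink]

lemma b2_right (p q : ℕ) (z : (ℝ × (Fin p → ℝ)) × (ℝ × (Fin q → ℝ)))
    (v : ℝ × (Fin q → ℝ)) : b2 p q z (0, v) = bMink q z.2 v := by
  simp [b2, bMink]

lemma part1 (p q : ℕ) (hp : 1 ≤ p) (hq : 1 ≤ q) :
    invisDom p q =
      {z : (ℝ × (Fin p → ℝ)) × (ℝ × (Fin q → ℝ)) |
        (qMink p z.1 < 0 ∧ 0 < z.1.1) ∧ (qMink q z.2 < 0 ∧ 0 < z.2.1)} := by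
  ext z
  constructor
  · rintro ⟨_, hb⟩
    constructor
    · refine lem2 hp z.1 fun u hu hu0 => ?_
      have h := hb (u, 0) (Or.inl ⟨hu, hu0, rfl⟩)
      rwa [b2_left] at h
    · refine lem2 hq z.2 fun v hv hv0 => ?_
      have h := hb (0, v) (Or.inr ⟨hv, hv0, rfl⟩)
      rwa [b2_right] at h
  · rintro ⟨⟨ha, ha0⟩, ⟨hb, hb0⟩⟩
    refine ⟨by unfold q2; linarith, ?_⟩
    rintro x (⟨h1, h2, h3⟩ | ⟨h1, h2, h3⟩)
    · have hx : x = (x.1, 0) := by rw [← h3]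
      rw [hx, b2_left]
      exact lem1 z.1 x.1 ha ha0 h1 h2
    · have hx : x = (0, x.2) := by rw [← h3]
      rw [hx, b2_right]
      exact lem1 z.2 x.2 hb hb0 h1 h2

lemma hull_left (p q : ℕ) (hp : 1 ≤ p) (a : ℝ × (Fin p → ℝ))
    (ha : qMink p a < 0) (ha0 : 0 < a.1) :
    (a, (0 : ℝ × (Fin q → ℝ))) ∈ convexHull ℝ (Cplusp p q ∪ Cplusq p q) := by
  obtain ⟨u, v, hu, hu0, hv, hv0, huv⟩ := lem3 hp a ha ha0
  have h1 : ((u, (0 : ℝ × (Fin q → ℝ)))) ∈ convexHull ℝ (Cplusp p q ∪ Cplusq p q) :=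
    subset_convexHull ℝ _ (Or.inl ⟨hu, hu0, rfl⟩)
  have h2 : ((v, (0 : ℝ × (Fin q → ℝ)))) ∈ convexHull ℝ (Cplusp p q ∪ Cplusq p q) :=
    subset_convexHull ℝ _ (Or.inl ⟨hv, hv0, rfl⟩)
  have hc := (convex_convexHull ℝ (Cplusp p q ∪ Cplusq p q)) h1 h2
    (by norm_num : (0:ℝ) ≤ 1/2) (by norm_num : (0:ℝ) ≤ 1/2) (by norm_num)
  have he : (1/2 : ℝ) • ((u, (0 : ℝ × (Fin q → ℝ)))) + (1/2 : ℝ) • ((v, (0 : ℝ × (Fin q → ℝ))))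
      = (a, (0 : ℝ × (Fin q → ℝ))) := by
    refine Prod.ext ?_ ?_
    · show (1/2 : ℝ) • u + (1/2 : ℝ) • v = a
      exact huv
    · show (1/2 : ℝ) • (0 : ℝ × (Fin q → ℝ)) + (1/2 : ℝ) • 0 = 0
      simp
  rwa [he] at hc

lemma hull_right (p q : ℕ) (hq : 1 ≤ q) (b : ℝ × (Fin q → ℝ))
    (hb : qMink q b < 0) (hb0 : 0 < b.1) :
    ((0 : ℝ × (Fin p → ℝ)), b) ∈ convexHull ℝ (Cplusp p q ∪ Cplusq p q) := by
  obtain ⟨u, v, hu, hu0, hv, hv0, huv⟩ := lem3 hq b hb hb0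
  have h1 : (((0 : ℝ × (Fin p → ℝ)), u)) ∈ convexHull ℝ (Cplusp p q ∪ Cplusq p q) :=
    subset_convexHull ℝ _ (Or.inr ⟨hu, hu0, rfl⟩)
  have h2 : (((0 : ℝ × (Fin p → ℝ)), v)) ∈ convexHull ℝ (Cplusp p q ∪ Cplusq p q) :=
    subset_convexHull ℝ _ (Or.inr ⟨hv, hv0, rfl⟩)
  have hc := (convex_convexHull ℝ (Cplusp p q ∪ Cplusq p q)) h1 h2
    (by norm_num : (0:ℝ) ≤ 1/2) (by norm_num : (0:ℝ) ≤ 1/2) (by norm_num)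
  have he : (1/2 : ℝ) • (((0 : ℝ × (Fin p → ℝ)), u)) + (1/2 : ℝ) • (((0 : ℝ × (Fin p → ℝ)), v))
      = (((0 : ℝ × (Fin p → ℝ)), b)) := by
    refine Prod.ext ?_ ?_
    · show (1/2 : ℝ) • (0 : ℝ × (Fin p → ℝ)) + (1/2 : ℝ) • 0 = 0
      simp
    · show (1/2 : ℝ) • u + (1/2 : ℝ) • v = b
      exact huv
  rwa [he] at hc

lemma qMink_smul (m : ℕ) (c : ℝ) (a : ℝ × (Fin m → ℝ)) :
    qMink m (c • a) = c ^ 2 * qMink m a := by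
  unfold qMink
  have h : ∑ i, ((c • a).2 i) ^ 2 = c ^ 2 * ∑ i, a.2 i ^ 2 := by
    rw [Finset.mul_sum]
    exact Finset.sum_congr rfl fun i _ => by
      simp [Prod.smul_snd, Pi.smul_apply, smul_eq_mul]; ring
  rw [h]
  have h2 : (c • a).1 = c * a.1 := rfl
  rw [h2]; ring

lemma T_subset_hull (p q : ℕ) (hp : 1 ≤ p) (hq : 1 ≤ q) :
    {z : (ℝ × (Fin p → ℝ)) × (ℝ × (Fin q → ℝ)) |
        (qMink p z.1 < 0 ∧ 0 < z.1.1) ∧ (qMink q z.2 < 0 ∧ 0 < z.2.1)}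
      ⊆ convexHull ℝ (Cplusp p q ∪ Cplusq p q) := by
  rintro z ⟨⟨ha, ha0⟩, ⟨hb, hb0⟩⟩
  have h1 := hull_left p q hp ((2:ℝ) • z.1)
    (by rw [qMink_smul]; nlinarith) (by show (0:ℝ) < 2 * z.1.1; linarith)
  have h2 := hull_right p q hq ((2:ℝ) • z.2)
    (by rw [qMink_smul]; nlinarith) (by show (0:ℝ) < 2 * z.2.1; linarith)
  have hc := (convex_convexHull ℝ (Cplusp p q ∪ Cplusq p q)) h1 h2
    (by norm_num : (0:ℝ) ≤ 1/2) (by norm_num : (0:ℝ) ≤ 1/2) (by norm_num)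
  have he : (1/2 : ℝ) • (((2:ℝ) • z.1, (0 : ℝ × (Fin q → ℝ))))
      + (1/2 : ℝ) • (((0 : ℝ × (Fin p → ℝ)), (2:ℝ) • z.2)) = z := by
    refine Prod.ext ?_ ?_
    · show (1/2 : ℝ) • ((2:ℝ) • z.1) + (1/2 : ℝ) • (0 : ℝ × (Fin p → ℝ)) = z.1
      rw [smul_smul, smul_zero, add_zero]
      norm_num
    · show (1/2 : ℝ) • (0 : ℝ × (Fin q → ℝ)) + (1/2 : ℝ) • ((2:ℝ) • z.2) = z.2
      rw [smul_smul, smul_zero, zero_add]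
      norm_num
  rwa [he] at hc

lemma T_open (p q : ℕ) :
    IsOpen {z : (ℝ × (Fin p → ℝ)) × (ℝ × (Fin q → ℝ)) |
        (qMink p z.1 < 0 ∧ 0 < z.1.1) ∧ (qMink q z.2 < 0 ∧ 0 < z.2.1)} := by
  have c1 : Continuous fun z : (ℝ × (Fin p → ℝ)) × (ℝ × (Fin q → ℝ)) => qMink p z.1 := by
    unfold qMink
    exact ((continuous_fst.fst.pow 2).neg).add
      (continuous_finset_sum _ fun i _ => ((continuous_apply i).comp continuous_fst.snd).pow 2)
  have c2 : Continuous fun z : (ℝ × (Fin p → ℝ)) × (ℝ × (Fin q → ℝ)) => qMink q z.2 := by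
    unfold qMink
    exact ((continuous_snd.fst.pow 2).neg).add
      (continuous_finset_sum _ fun i _ => ((continuous_apply i).comp continuous_snd.snd).pow 2)
  have hset : {z : (ℝ × (Fin p → ℝ)) × (ℝ × (Fin q → ℝ)) |
        (qMink p z.1 < 0 ∧ 0 < z.1.1) ∧ (qMink q z.2 < 0 ∧ 0 < z.2.1)} =
      ({z | qMink p z.1 < 0} ∩ {z | 0 < z.1.1}) ∩
        ({z | qMink q z.2 < 0} ∩ {z | 0 < z.2.1}) := by
    ext z
    simp only [Set.mem_setOf_eq, Set.mem_inter_iff]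
    try tauto
  rw [hset]
  exact ((isOpen_lt c1 continuous_const).inter
      (isOpen_lt continuous_const continuous_fst.fst)).inter
    ((isOpen_lt c2 continuous_const).inter
      (isOpen_lt continuous_const continuous_snd.fst))


lemma union_subset_prod (p q : ℕ) :
    Cplusp p q ∪ Cplusq p q ⊆ (Kc p) ×ˢ (Kc q) := by
  rintro z (⟨h1, h2, h3⟩ | ⟨h1, h2, h3⟩)
  · constructor
    · show Real.sqrt (∑ i, z.1.2 i ^ 2) ≤ z.1.1
      have hS : (∑ i, z.1.2 i ^ 2) = z.1.1 ^ 2 := by unfold qMink at h1; linarith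
      rw [hS, Real.sqrt_sq h2.le]
    · show Real.sqrt (∑ i, z.2.2 i ^ 2) ≤ z.2.1
      rw [h3]
      simp
  · constructor
    · show Real.sqrt (∑ i, z.1.2 i ^ 2) ≤ z.1.1
      rw [h3]
      simp
    · show Real.sqrt (∑ i, z.2.2 i ^ 2) ≤ z.2.1
      have hS : (∑ i, z.2.2 i ^ 2) = z.2.1 ^ 2 := by unfold qMink at h1; linarith
      rw [hS, Real.sqrt_sq h2.le]

/-- The invisible domain of `Λ_p ∪ Λ_q` equals the set of pairs of
future-pointing timelike vectors, which is the interior of the convex hull of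
`Ĉ⁺_p ∪ Ĉ⁺_q`. -/
theorem stmt10 (p q : ℕ) (hp : 1 ≤ p) (hq : 1 ≤ q) :
    invisDom p q =
      {z : (ℝ × (Fin p → ℝ)) × (ℝ × (Fin q → ℝ)) |
        (qMink p z.1 < 0 ∧ 0 < z.1.1) ∧ (qMink q z.2 < 0 ∧ 0 < z.2.1)} ∧
    invisDom p q = interior (convexHull ℝ (Cplusp p q ∪ Cplusq p q)) := by
  have hpart1 := part1 p q hp hq
  refine ⟨hpart1, ?_⟩
  rw [hpart1]
  apply Set.Subset.antisymm
  · exact interior_maximal (T_subset_hull p q hp hq) (T_open p q)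
  · have hsub : convexHull ℝ (Cplusp p q ∪ Cplusq p q) ⊆ (Kc p) ×ˢ (Kc q) :=
      convexHull_min (union_subset_prod p q) ((convex_Kc p).prod (convex_Kc q))
    refine (interior_mono hsub).trans ?_
    rw [interior_prod_eq, interior_Kc, interior_Kc]
    rintro z ⟨h1, h2⟩
    exact ⟨(sqrt_lt_iff_timelike p z.1).1 h1, (sqrt_lt_iff_timelike q z.2).1 h2⟩
end

section
/- Let p, q ≥ 1 and n = p + q, and identify ℝ^{n+2} = ℝ^{p+1} × ℝ^{q+1} with q_{2,n}(a, b) = q_{1,p}(a) + q_{1,q}(b). Let Λ̂_{p,q} = {(a, b) : q_{1,p}(a) = 0, q_{1,q}(b) = 0, a₀ ≥ 0, b₀ ≥ 0}. Then ⟨z | z′⟩ ≤ 0 for all z, z′ ∈ Λ̂_{p,q}. (Hence the limit set Λ_{p,q} of a split AdS spacetime is achronal.) -/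
lemma bMink_nonpos (m : ℕ) (x y : ℝ × (Fin m → ℝ))
    (hx : qMink m x = 0) (hy : qMink m y = 0) (hx0 : 0 ≤ x.1) (hy0 : 0 ≤ y.1) :
    bMink m x y ≤ 0 := by
  have hx' : ∑ i, (x.2 i) ^ 2 = x.1 ^ 2 := by
    have := hx; unfold qMink at this; linarith
  have hy' : ∑ i, (y.2 i) ^ 2 = y.1 ^ 2 := by
    have := hy; unfold qMink at this; linarith
  have hcs := Finset.sum_mul_sq_le_sq_mul_sq Finset.univ x.2 y.2
  rw [hx', hy'] at hcs
  have h2 : (∑ i, x.2 i * y.2 i) ^ 2 ≤ (x.1 * y.1) ^ 2 := by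
    calc (∑ i, x.2 i * y.2 i) ^ 2 ≤ x.1 ^ 2 * y.1 ^ 2 := hcs
    _ = (x.1 * y.1) ^ 2 := by ring
  have h3 : ∑ i, x.2 i * y.2 i ≤ x.1 * y.1 := by
    nlinarith [h2, mul_nonneg hx0 hy0]
  unfold bMink; linarith

/-- The set `Λ̂_{p,q} = {(a,b) : q_{1,p}(a) = 0, q_{1,q}(b) = 0, a₀ ≥ 0, b₀ ≥ 0}`
has pairwise nonpositive scalar products: the limit set of a split AdS
spacetime is achronal. -/
theorem stmt11 (p q : ℕ) (hp : 1 ≤ p) (hq : 1 ≤ q)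
    (z z' : (ℝ × (Fin p → ℝ)) × (ℝ × (Fin q → ℝ)))
    (hz : qMink p z.1 = 0 ∧ qMink q z.2 = 0 ∧ 0 ≤ z.1.1 ∧ 0 ≤ z.2.1)
    (hz' : qMink p z'.1 = 0 ∧ qMink q z'.2 = 0 ∧ 0 ≤ z'.1.1 ∧ 0 ≤ z'.2.1) :
    b2 p q z z' ≤ 0 := by
  obtain ⟨h1, h2, h3, h4⟩ := hz
  obtain ⟨h1', h2', h3', h4'⟩ := hz'
  have := bMink_nonpos p z.1 z'.1 h1 h1' h3 h3'
  have := bMink_nonpos q z.2 z'.2 h2 h2' h4 h4'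
  unfold b2; linarith
end

section
/- Let m ≥ 1 and let x, y be nonzero vectors of ℝ^{m+1} with q_{1,m}(x) = q_{1,m}(y) = 0, x₀ > 0 and y₀ > 0 (two future-pointing null vectors). Then ⟨x | y⟩ ≤ 0, and ⟨x | y⟩ = 0 if and only if y = λx for some λ > 0. -/
/-- For two future-pointing null vectors `x, y` in Minkowski space one has
`⟨x | y⟩ ≤ 0`, with equality if and only if `y` is a positive multiple of `x`. -/
theorem stmt12 (m : ℕ) (hm : 1 ≤ m) (x y : ℝ × (Fin m → ℝ))
    (hx0 : x ≠ 0) (hy0 : y ≠ 0)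
    (hx : qMink m x = 0) (hy : qMink m y = 0)
    (hx1 : 0 < x.1) (hy1 : 0 < y.1) :
    bMink m x y ≤ 0 ∧ (bMink m x y = 0 ↔ ∃ l : ℝ, 0 < l ∧ y = l • x) := by
  set u : EuclideanSpace ℝ (Fin m) := WithLp.toLp 2 x.2 with hu
  set v : EuclideanSpace ℝ (Fin m) := WithLp.toLp 2 y.2 with hv
  have hnu : ‖u‖ = x.1 := by
    have : ‖u‖ = Real.sqrt (∑ i, (x.2 i) ^ 2) := by
      rw [EuclideanSpace.norm_eq]
      congr 1
      exact Finset.sum_congr rfl fun i _ => by rw [Real.norm_eq_abs, sq_abs]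
    rw [this]
    have hs : ∑ i, (x.2 i) ^ 2 = x.1 ^ 2 := by
      have := hx; unfold qMink at this; linarith
    rw [hs, Real.sqrt_sq hx1.le]
  have hnv : ‖v‖ = y.1 := by
    have : ‖v‖ = Real.sqrt (∑ i, (y.2 i) ^ 2) := by
      rw [EuclideanSpace.norm_eq]
      congr 1
      exact Finset.sum_congr rfl fun i _ => by rw [Real.norm_eq_abs, sq_abs]
    rw [this]
    have hs : ∑ i, (y.2 i) ^ 2 = y.1 ^ 2 := by
      have := hy; unfold qMink at this; linarith
    rw [hs, Real.sqrt_sq hy1.le]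
  have hinner : (inner ℝ u v : ℝ) = ∑ i, x.2 i * y.2 i := by
    rw [PiLp.inner_apply]
    exact Finset.sum_congr rfl fun i _ => by simp [hu, hv, mul_comm]
  have hle : (inner ℝ u v : ℝ) ≤ x.1 * y.1 := by
    calc (inner ℝ u v : ℝ) ≤ ‖u‖ * ‖v‖ := real_inner_le_norm u v
    _ = x.1 * y.1 := by rw [hnu, hnv]
  constructor
  · unfold bMink; rw [← hinner]; linarith
  · constructor
    · intro hb
      unfold bMink at hb
      rw [← hinner] at hb
      have heq : (inner ℝ u v : ℝ) = ‖u‖ * ‖v‖ := by rw [hnu, hnv]; linarith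
      have := (inner_eq_norm_mul_iff_real).mp heq
      rw [hnu, hnv] at this
      refine ⟨y.1 / x.1, div_pos hy1 hx1, ?_⟩
      have h2 : y.2 = (y.1 / x.1) • x.2 := by
        have : y.1 • x.2 = x.1 • y.2 := congrArg WithLp.ofLp this
        funext i
        have hi := congrFun this i
        simp only [Pi.smul_apply, smul_eq_mul] at hi ⊢
        field_simp
        linarith
      ext
      · simp [Prod.smul_fst, smul_eq_mul]
        field_simp
      · exact congrFun h2 _
    · rintro ⟨l, hl, rfl⟩
      unfold bMink qMink at *
      simp only [Prod.smul_fst, Prod.smul_snd, Pi.smul_apply, smul_eq_mul]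
      have : ∑ i, x.2 i * (l * x.2 i) = l * ∑ i, (x.2 i)^2 := by
        rw [Finset.mul_sum]; exact Finset.sum_congr rfl fun i _ => by ring
      rw [this]
      nlinarith [hx]
end
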